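/- Under the same setup (A independent of (Y^{(1)},...,Y^{(k)}, X), P(A = a_t) = π_t > 0, Y = ∑_t Y^{(t)} I(A = a_t), square-integrability, Σ_X positive definite), the minimizer of E[(Y − ϑ^T A − ∑_{t=1}^k b_t^T (X − μ_X) I(A = a_t))²] over (ϑ, b_1,...,b_k) is unique and given by ϑ_t = E(Y^{(t)}) and b_t = β_t = Σ_X^{-1} cov(X, Y^{(t)}) for each t. -/

import Mathlib

open Matrix MeasureTheory BigOperators

lemma integrable_mul_of_L2' {Ω : Type*} [MeasurableSpace Ω] {μ : Measure Ω}
    {f g : Ω → ℝ} (hf : MemLp f 2 μ) (hg : MemLp g 2 μ) :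
    Integrable (fun ω => f ω * g ω) μ := by
  have h : Integrable (fun ω => (((f ω + g ω) ^ 2 - f ω ^ 2) - g ω ^ 2) / 2) μ :=
    (((hf.add hg).integrable_sq.sub hf.integrable_sq).sub hg.integrable_sq).div_const 2
  have e : (fun ω => f ω * g ω)
      = fun ω => (((f ω + g ω) ^ 2 - f ω ^ 2) - g ω ^ 2) / 2 := by
    funext ω; ring
  rw [e]; exact h

/-- Lemma 2(ii), second part: population least squares under the heterogeneous (ANHECOVA)
working model uniquely identifies θₜ = E(Y⁽ᵗ⁾) and bₜ = βₜ = Σ⁻¹cov(X, Y⁽ᵗ⁾). -/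
theorem stmt11 {Ω : Type*} [MeasurableSpace Ω] (μ : Measure Ω) [IsProbabilityMeasure μ]
    (p k : ℕ) (Yp : Fin k → Ω → ℝ) (X : Ω → Fin p → ℝ) (T : Ω → Fin k)
    (hT : Measurable T)
    (hYp : ∀ t, MemLp (Yp t) 2 μ) (hX : ∀ i, MemLp (fun ω => X ω i) 2 μ)
    (A : Ω → Fin k → ℝ) (hA : ∀ ω, A ω = fun t => if T ω = t then 1 else 0)
    (hindep : ProbabilityTheory.IndepFun T (fun ω => (fun t => Yp t ω, X ω)) μ)
    (π : Fin k → ℝ) (hπ : ∀ t, 0 < π t)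
    (hPT : ∀ t, μ {ω | T ω = t} = ENNReal.ofReal (π t))
    (Y : Ω → ℝ) (hY : ∀ ω, Y ω = Yp (T ω) ω)
    (μX : Fin p → ℝ) (hμX : ∀ i, μX i = ∫ ω, X ω i ∂μ)
    (S : Matrix (Fin p) (Fin p) ℝ)
    (hS : ∀ i j, S i j = ∫ ω, (X ω i - μX i) * (X ω j - μX j) ∂μ)
    (hSpd : S.PosDef)
    (β : Fin k → Fin p → ℝ)
    (hβ : ∀ t, β t = S⁻¹.mulVec (fun i => ∫ ω, (X ω i - μX i) * (Yp t ω - ∫ ω', Yp t ω' ∂μ) ∂μ))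
    (θ : Fin k → ℝ) (hθ : ∀ t, θ t = ∫ ω, Yp t ω ∂μ)
    (L : (Fin k → ℝ) → (Fin k → Fin p → ℝ) → ℝ)
    (hL : ∀ ϑ b, L ϑ b = ∫ ω, (Y ω - ϑ ⬝ᵥ A ω
        - ∑ t, (b t ⬝ᵥ (X ω - μX)) * (if T ω = t then 1 else 0)) ^ 2 ∂μ) :
    (∀ ϑ b, L θ β ≤ L ϑ b) ∧
    (∀ ϑ b, L ϑ b = L θ β → ϑ = θ ∧ b = β) := by
  -- basic L² facts
  have hXc : ∀ i, MemLp (fun ω => X ω i - μX i) 2 μ :=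
    fun i => (hX i).sub (memLp_const _)
  have hXcInt : ∀ i, Integrable (fun ω => X ω i - μX i) μ :=
    fun i => (hXc i).integrable one_le_two
  have hXcMean : ∀ i, ∫ ω, (X ω i - μX i) ∂μ = 0 := by
    intro i
    rw [integral_sub ((hX i).integrable one_le_two) (integrable_const _), integral_const]
    simp [hμX i]
  have hLinMem : ∀ v : Fin p → ℝ, MemLp (fun ω => ∑ i, v i * (X ω i - μX i)) 2 μ :=
    fun v => memLp_finset_sum _ (fun i _ => (hXc i).const_mul (v i))
  have hLinInt : ∀ v : Fin p → ℝ, Integrable (fun ω => ∑ i, v i * (X ω i - μX i)) μ :=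
    fun v => (hLinMem v).integrable one_le_two
  have hLinMean : ∀ v : Fin p → ℝ, ∫ ω, (∑ i, v i * (X ω i - μX i)) ∂μ = 0 := by
    intro v
    rw [integral_finset_sum _ (fun i _ => ((hXcInt i).const_mul (v i)))]
    simp [integral_const_mul, hXcMean]
  have hFMem : ∀ (c : ℝ) (v : Fin p → ℝ) (t : Fin k),
      MemLp (fun ω => Yp t ω - c - ∑ i, v i * (X ω i - μX i)) 2 μ :=
    fun c v t => ((hYp t).sub (memLp_const c)).sub (hLinMem v)
  have hFInt : ∀ (c : ℝ) (v : Fin p → ℝ) (t : Fin k),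
      Integrable (fun ω => Yp t ω - c - ∑ i, v i * (X ω i - μX i)) μ :=
    fun c v t => (hFMem c v t).integrable one_le_two
  have hYcMem : ∀ (t : Fin k) (c : ℝ), MemLp (fun ω => Yp t ω - c) 2 μ := by
    intro t c; exact (hYp t).sub (memLp_const c)
  have hYcInt : ∀ (t : Fin k) (c : ℝ), Integrable (fun ω => Yp t ω - c) μ := by
    intro t c; exact (hYcMem t c).integrable one_le_two
  -- mean of the optimal residual is zero
  have hgMean : ∀ t : Fin k,
      ∫ ω, (Yp t ω - θ t - ∑ i, β t i * (X ω i - μX i)) ∂μ = 0 := by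
    intro t
    rw [integral_sub (hYcInt t (θ t)) (hLinInt (β t)),
      integral_sub ((hYp t).integrable one_le_two) (integrable_const _),
      integral_const, hLinMean]
    simp [hθ t]
  -- covariance identities
  have hSdet : IsUnit S.det := hSpd.det_pos.ne'.isUnit
  have hCov : ∀ (t : Fin k) (i : Fin p),
      ∫ ω, (X ω i - μX i) * (Yp t ω - θ t - ∑ j, β t j * (X ω j - μX j)) ∂μ = 0 := by
    intro t i
    set cv : Fin p → ℝ :=
      fun i => ∫ ω, (X ω i - μX i) * (Yp t ω - ∫ ω', Yp t ω' ∂μ) ∂μ with hcv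
    have hSβ : S.mulVec (β t) = cv := by
      rw [hβ t, mulVec_mulVec, Matrix.mul_nonsing_inv S hSdet, one_mulVec]
    have e : (fun ω => (X ω i - μX i) * (Yp t ω - θ t - ∑ j, β t j * (X ω j - μX j)))
        = fun ω => (X ω i - μX i) * (Yp t ω - θ t)
            - ∑ j, β t j * ((X ω i - μX i) * (X ω j - μX j)) := by
      funext ω
      rw [mul_sub]
      congr 1
      rw [Finset.mul_sum]
      exact Finset.sum_congr rfl fun j _ => by ring
    have int1 : Integrable (fun ω => (X ω i - μX i) * (Yp t ω - θ t)) μ :=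
      integrable_mul_of_L2' (hXc i) (hYcMem t (θ t))
    have int2 : Integrable
        (fun ω => ∑ j, β t j * ((X ω i - μX i) * (X ω j - μX j))) μ :=
      integrable_finset_sum _ fun j _ =>
        (integrable_mul_of_L2' (hXc i) (hXc j)).const_mul (β t j)
    rw [show (∫ ω, (X ω i - μX i) * (Yp t ω - θ t - ∑ j, β t j * (X ω j - μX j)) ∂μ)
        = ∫ ω, ((X ω i - μX i) * (Yp t ω - θ t)
            - ∑ j, β t j * ((X ω i - μX i) * (X ω j - μX j))) ∂μ from by rw [e],
      integral_sub int1 int2,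
      integral_finset_sum _ (fun j _ =>
        (integrable_mul_of_L2' (hXc i) (hXc j)).const_mul (β t j))]
    have h1 : ∫ ω, (X ω i - μX i) * (Yp t ω - θ t) ∂μ = cv i := by
      rw [hcv, hθ t]
    have h2 : ∑ j, ∫ ω, β t j * ((X ω i - μX i) * (X ω j - μX j)) ∂μ = cv i := by
      have : ∀ j, ∫ ω, β t j * ((X ω i - μX i) * (X ω j - μX j)) ∂μ = β t j * S i j := by
        intro j; rw [integral_const_mul, ← hS i j]
      rw [Finset.sum_congr rfl fun j _ => this j, ← hSβ]
      simp only [mulVec, dotProduct]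
      exact Finset.sum_congr rfl fun j _ => by ring
    rw [h1, h2, sub_self]
  -- quadratic form of a linear combination
  have hHsq : ∀ v : Fin p → ℝ,
      ∫ ω, (∑ i, v i * (X ω i - μX i)) ^ 2 ∂μ = v ⬝ᵥ S.mulVec v := by
    intro v
    have e : (fun ω => (∑ i, v i * (X ω i - μX i)) ^ 2)
        = fun ω => ∑ i, ∑ j, (v i * v j) * ((X ω i - μX i) * (X ω j - μX j)) := by
      funext ω
      rw [sq, Finset.sum_mul_sum]
      exact Finset.sum_congr rfl fun i _ => Finset.sum_congr rfl fun j _ => by ring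
    rw [show (∫ ω, (∑ i, v i * (X ω i - μX i)) ^ 2 ∂μ)
        = ∫ ω, (∑ i, ∑ j, (v i * v j) * ((X ω i - μX i) * (X ω j - μX j))) ∂μ from by rw [e],
      integral_finset_sum _ (fun i _ => integrable_finset_sum _ fun j _ =>
        (integrable_mul_of_L2' (hXc i) (hXc j)).const_mul (v i * v j))]
    have : ∀ i, ∫ ω, (∑ j, (v i * v j) * ((X ω i - μX i) * (X ω j - μX j))) ∂μ
        = ∑ j, (v i * v j) * S i j := by
      intro i
      rw [integral_finset_sum _ (fun j _ =>
        (integrable_mul_of_L2' (hXc i) (hXc j)).const_mul (v i * v j))]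
      exact Finset.sum_congr rfl fun j _ => by rw [integral_const_mul, ← hS i j]
    rw [Finset.sum_congr rfl fun i _ => this i]
    simp only [dotProduct, mulVec, Finset.mul_sum]
    exact Finset.sum_congr rfl fun i _ => Finset.sum_congr rfl fun j _ => by ring
  -- expansion of the per-arm squared error
  have expand : ∀ (ϑ : Fin k → ℝ) (b : Fin k → Fin p → ℝ) (t : Fin k),
      ∫ ω, (Yp t ω - ϑ t - ∑ i, b t i * (X ω i - μX i)) ^ 2 ∂μ
        = (∫ ω, (Yp t ω - θ t - ∑ i, β t i * (X ω i - μX i)) ^ 2 ∂μ)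
          + ((ϑ t - θ t) ^ 2 + (b t - β t) ⬝ᵥ S.mulVec (b t - β t)) := by
    intro ϑ b t
    set c : ℝ := ϑ t - θ t with hc
    have e : (fun ω => (Yp t ω - ϑ t - ∑ i, b t i * (X ω i - μX i)) ^ 2)
        = fun ω => (Yp t ω - θ t - ∑ i, β t i * (X ω i - μX i)) ^ 2 + c ^ 2
            + (∑ i, (b t i - β t i) * (X ω i - μX i)) ^ 2
            - 2 * c * (Yp t ω - θ t - ∑ i, β t i * (X ω i - μX i))
            - 2 * ((Yp t ω - θ t - ∑ i, β t i * (X ω i - μX i))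
                * (∑ i, (b t i - β t i) * (X ω i - μX i)))
            + 2 * c * (∑ i, (b t i - β t i) * (X ω i - μX i)) := by
      funext ω
      have hsplit : ∑ i, (b t i - β t i) * (X ω i - μX i)
          = (∑ i, b t i * (X ω i - μX i)) - ∑ i, β t i * (X ω i - μX i) := by
        rw [← Finset.sum_sub_distrib]
        exact Finset.sum_congr rfl fun i _ => by ring
      rw [hsplit, hc]; ring
    have hG2 : Integrable
        (fun ω => (Yp t ω - θ t - ∑ i, β t i * (X ω i - μX i)) ^ 2) μ := by
      exact (hFMem (θ t) (β t) t).integrable_sq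
    have hH2 : Integrable
        (fun ω => (∑ i, (b t i - β t i) * (X ω i - μX i)) ^ 2) μ := by
      exact (hLinMem (fun i => b t i - β t i)).integrable_sq
    have i2 : Integrable
        (fun ω => (Yp t ω - θ t - ∑ i, β t i * (X ω i - μX i)) ^ 2 + c ^ 2) μ :=
      hG2.add (integrable_const _)
    have i3 : Integrable
        (fun ω => (Yp t ω - θ t - ∑ i, β t i * (X ω i - μX i)) ^ 2 + c ^ 2
          + (∑ i, (b t i - β t i) * (X ω i - μX i)) ^ 2) μ := i2.add hH2
    have icG : Integrable
        (fun ω => 2 * c * (Yp t ω - θ t - ∑ i, β t i * (X ω i - μX i))) μ :=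
      (hFInt (θ t) (β t) t).const_mul (2 * c)
    have iGH : Integrable
        (fun ω => 2 * ((Yp t ω - θ t - ∑ i, β t i * (X ω i - μX i))
            * (∑ i, (b t i - β t i) * (X ω i - μX i)))) μ :=
      (integrable_mul_of_L2' (hFMem (θ t) (β t) t)
        (hLinMem (fun i => b t i - β t i))).const_mul 2
    have icH : Integrable
        (fun ω => 2 * c * (∑ i, (b t i - β t i) * (X ω i - μX i))) μ :=
      (hLinInt (fun i => b t i - β t i)).const_mul (2 * c)
    have i4 : Integrable
        (fun ω => (Yp t ω - θ t - ∑ i, β t i * (X ω i - μX i)) ^ 2 + c ^ 2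
          + (∑ i, (b t i - β t i) * (X ω i - μX i)) ^ 2
          - 2 * c * (Yp t ω - θ t - ∑ i, β t i * (X ω i - μX i))) μ := i3.sub icG
    have i5 : Integrable
        (fun ω => (Yp t ω - θ t - ∑ i, β t i * (X ω i - μX i)) ^ 2 + c ^ 2
          + (∑ i, (b t i - β t i) * (X ω i - μX i)) ^ 2
          - 2 * c * (Yp t ω - θ t - ∑ i, β t i * (X ω i - μX i))
          - 2 * ((Yp t ω - θ t - ∑ i, β t i * (X ω i - μX i))
              * (∑ i, (b t i - β t i) * (X ω i - μX i)))) μ := i4.sub iGH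
    rw [show (∫ ω, (Yp t ω - ϑ t - ∑ i, b t i * (X ω i - μX i)) ^ 2 ∂μ)
        = ∫ ω, ((Yp t ω - θ t - ∑ i, β t i * (X ω i - μX i)) ^ 2 + c ^ 2
            + (∑ i, (b t i - β t i) * (X ω i - μX i)) ^ 2
            - 2 * c * (Yp t ω - θ t - ∑ i, β t i * (X ω i - μX i))
            - 2 * ((Yp t ω - θ t - ∑ i, β t i * (X ω i - μX i))
                * (∑ i, (b t i - β t i) * (X ω i - μX i)))
            + 2 * c * (∑ i, (b t i - β t i) * (X ω i - μX i))) ∂μ from by rw [e],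
      integral_add i5 icH, integral_sub i4 iGH, integral_sub i3 icG,
      integral_add i2 hH2, integral_add hG2 (integrable_const _)]
    have hIc : (∫ _ω : Ω, c ^ 2 ∂μ) = c ^ 2 := by
      simp [integral_const]
    have hIcG : ∫ ω, 2 * c * (Yp t ω - θ t - ∑ i, β t i * (X ω i - μX i)) ∂μ = 0 := by
      rw [integral_const_mul, hgMean t, mul_zero]
    have hIcH : ∫ ω, 2 * c * (∑ i, (b t i - β t i) * (X ω i - μX i)) ∂μ = 0 := by
      rw [integral_const_mul, hLinMean, mul_zero]
    have hIGH : ∫ ω, 2 * ((Yp t ω - θ t - ∑ i, β t i * (X ω i - μX i))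
        * (∑ i, (b t i - β t i) * (X ω i - μX i))) ∂μ = 0 := by
      rw [integral_const_mul]
      have e2 : (fun ω => (Yp t ω - θ t - ∑ i, β t i * (X ω i - μX i))
          * (∑ i, (b t i - β t i) * (X ω i - μX i)))
          = fun ω => ∑ i, (b t i - β t i)
              * ((X ω i - μX i) * (Yp t ω - θ t - ∑ j, β t j * (X ω j - μX j))) := by
        funext ω
        rw [Finset.mul_sum]
        exact Finset.sum_congr rfl fun i _ => by ring
      rw [show (∫ ω, (Yp t ω - θ t - ∑ i, β t i * (X ω i - μX i))
          * (∑ i, (b t i - β t i) * (X ω i - μX i)) ∂μ)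
          = ∫ ω, (∑ i, (b t i - β t i)
              * ((X ω i - μX i) * (Yp t ω - θ t - ∑ j, β t j * (X ω j - μX j)))) ∂μ
          from by rw [e2],
        integral_finset_sum _ (fun i _ =>
          (integrable_mul_of_L2' (hXc i) (hFMem (θ t) (β t) t)).const_mul _)]
      have hz : ∀ i, ∫ ω, (b t i - β t i)
          * ((X ω i - μX i) * (Yp t ω - θ t - ∑ j, β t j * (X ω j - μX j))) ∂μ = 0 := by
        intro i; rw [integral_const_mul, hCov t i, mul_zero]
      rw [Finset.sum_congr rfl fun i _ => hz i]
      simp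
    have hIH2 := hHsq (fun i => b t i - β t i)
    have hdv : (fun i => b t i - β t i) = b t - β t := rfl
    rw [hIc, hIcG, hIcH, hIGH, hIH2, hdv]
    ring
  -- decomposition of the loss over arms
  have hLsum : ∀ (ϑ : Fin k → ℝ) (b : Fin k → Fin p → ℝ),
      L ϑ b = ∑ t, π t * ∫ ω, (Yp t ω - ϑ t - ∑ i, b t i * (X ω i - μX i)) ^ 2 ∂μ := by
    intro ϑ b
    have e : (fun ω => (Y ω - ϑ ⬝ᵥ A ω
          - ∑ t, (b t ⬝ᵥ (X ω - μX)) * (if T ω = t then 1 else 0)) ^ 2)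
        = fun ω => ∑ t, (if T ω = t then (1:ℝ) else 0)
            * (Yp t ω - ϑ t - ∑ i, b t i * (X ω i - μX i)) ^ 2 := by
      funext ω
      rw [hA ω, hY ω]
      simp only [dotProduct, Pi.sub_apply, mul_ite, ite_mul, mul_one, mul_zero,
        one_mul, zero_mul, Finset.sum_ite_eq, Finset.mem_univ, if_true]
    have hφ : ∀ t : Fin k, Measurable (fun s : Fin k => if s = t then (1:ℝ) else 0) :=
      fun t => Measurable.of_discrete
    have hψ : ∀ t : Fin k, Measurable (fun q : (Fin k → ℝ) × (Fin p → ℝ) =>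
        (q.1 t - ϑ t - ∑ i, b t i * (q.2 i - μX i)) ^ 2) := by
      intro t
      apply Measurable.pow_const
      apply Measurable.sub
      · exact ((measurable_pi_apply t).comp measurable_fst).sub measurable_const
      · exact Finset.measurable_sum _ fun i _ =>
          (((measurable_pi_apply i).comp measurable_snd).sub measurable_const).const_mul _
    have hind : ∀ t : Fin k, ProbabilityTheory.IndepFun
        (fun ω => if T ω = t then (1:ℝ) else 0)
        (fun ω => (Yp t ω - ϑ t - ∑ i, b t i * (X ω i - μX i)) ^ 2) μ := by
      intro t
      exact hindep.comp (hφ t) (hψ t)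
    have hindicatorEq : ∀ t : Fin k, (fun ω => if T ω = t then (1:ℝ) else 0)
        = (T ⁻¹' {t}).indicator (fun _ => (1:ℝ)) := by
      intro t; funext ω
      by_cases h : T ω = t <;> simp [Set.indicator_apply, Set.mem_preimage, h]
    have hmeasSet : ∀ t : Fin k, MeasurableSet (T ⁻¹' {t}) :=
      fun t => hT (measurableSet_singleton t)
    have hi1 : ∀ t : Fin k, Integrable (fun ω => if T ω = t then (1:ℝ) else 0) μ := by
      intro t
      rw [hindicatorEq t]
      exact (integrable_const 1).indicator (hmeasSet t)
    have hi2 : ∀ t : Fin k, Integrable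
        (fun ω => (Yp t ω - ϑ t - ∑ i, b t i * (X ω i - μX i)) ^ 2) μ :=
      fun t => (hFMem (ϑ t) (b t) t).integrable_sq
    have hiprod : ∀ t : Fin k, Integrable (fun ω => (if T ω = t then (1:ℝ) else 0)
        * (Yp t ω - ϑ t - ∑ i, b t i * (X ω i - μX i)) ^ 2) μ := by
      intro t
      exact (hind t).integrable_mul (hi1 t) (hi2 t)
    have hπint : ∀ t : Fin k, ∫ ω, (if T ω = t then (1:ℝ) else 0) ∂μ = π t := by
      intro t
      have hμset : μ (T ⁻¹' {t}) = ENNReal.ofReal (π t) := by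
        rw [← hPT t]
        rfl
      rw [hindicatorEq t, integral_indicator_const (1:ℝ) (hmeasSet t), measureReal_def, hμset,
        ENNReal.toReal_ofReal (hπ t).le, smul_eq_mul, mul_one]
    rw [hL ϑ b,
      show (∫ ω, (Y ω - ϑ ⬝ᵥ A ω
          - ∑ t, (b t ⬝ᵥ (X ω - μX)) * (if T ω = t then 1 else 0)) ^ 2 ∂μ)
        = ∫ ω, (∑ t, (if T ω = t then (1:ℝ) else 0)
            * (Yp t ω - ϑ t - ∑ i, b t i * (X ω i - μX i)) ^ 2) ∂μ from by rw [e],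
      integral_finset_sum _ (fun t _ => hiprod t)]
    refine Finset.sum_congr rfl fun t _ => ?_
    have hfac := (hind t).integral_fun_mul_eq_mul_integral (hi1 t).aestronglyMeasurable (hi2 t).aestronglyMeasurable
    have hthis : ∫ ω, (if T ω = t then (1:ℝ) else 0)
        * (Yp t ω - ϑ t - ∑ i, b t i * (X ω i - μX i)) ^ 2 ∂μ
        = (∫ ω, (if T ω = t then (1:ℝ) else 0) ∂μ)
          * ∫ ω, (Yp t ω - ϑ t - ∑ i, b t i * (X ω i - μX i)) ^ 2 ∂μ := hfac
    rw [hthis, hπint t]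
  -- positivity of the quadratic form
  have hquad : ∀ d : Fin p → ℝ, 0 ≤ d ⬝ᵥ S.mulVec d ∧ (d ⬝ᵥ S.mulVec d = 0 → d = 0) := by
    intro d
    by_cases hd : d = 0
    · subst hd; simp
    · have h := hSpd.dotProduct_mulVec_pos hd
      rw [star_trivial] at h
      exact ⟨h.le, fun h0 => absurd h0 h.ne'⟩
  -- final assembly
  set Q : (Fin k → ℝ) → (Fin k → Fin p → ℝ) → Fin k → ℝ :=
    fun ϑ b t => (ϑ t - θ t) ^ 2 + (b t - β t) ⬝ᵥ S.mulVec (b t - β t) with hQ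
  have hQnonneg : ∀ ϑ b t, 0 ≤ Q ϑ b t :=
    fun ϑ b t => add_nonneg (sq_nonneg _) (hquad _).1
  have hLQ : ∀ ϑ b, L ϑ b = L θ β + ∑ t, π t * Q ϑ b t := by
    intro ϑ b
    have h1 := hLsum ϑ b
    have h2 := hLsum θ β
    have h2' : L θ β = ∑ t, π t * ∫ ω, (Yp t ω - θ t - ∑ i, β t i * (X ω i - μX i)) ^ 2 ∂μ := h2
    rw [h1, h2']
    rw [← Finset.sum_add_distrib]
    refine Finset.sum_congr rfl fun t _ => ?_
    rw [expand ϑ b t, mul_add]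
  constructor
  · intro ϑ b
    rw [hLQ ϑ b]
    have : 0 ≤ ∑ t, π t * Q ϑ b t :=
      Finset.sum_nonneg fun t _ => mul_nonneg (hπ t).le (hQnonneg ϑ b t)
    linarith
  · intro ϑ b heq
    rw [hLQ ϑ b] at heq
    have hsum0 : ∑ t, π t * Q ϑ b t = 0 := by linarith
    have hterm : ∀ t ∈ Finset.univ, π t * Q ϑ b t = 0 := by
      rw [← Finset.sum_eq_zero_iff_of_nonneg
        (fun t _ => mul_nonneg (hπ t).le (hQnonneg ϑ b t))]
      exact hsum0
    have hQ0 : ∀ t, Q ϑ b t = 0 := by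
      intro t
      have := hterm t (Finset.mem_univ t)
      exact (mul_eq_zero.1 this).resolve_left (hπ t).ne'
    have hc : ∀ t, ϑ t = θ t := by
      intro t
      have h := hQ0 t
      have h1 : (ϑ t - θ t) ^ 2 = 0 := by
        have := (hquad (b t - β t)).1
        have := sq_nonneg (ϑ t - θ t)
        simp only [hQ] at h
        linarith [(hquad (b t - β t)).1]
      have := pow_eq_zero_iff (n := 2) (by norm_num) |>.1 h1
      linarith [sub_eq_zero.1 this]
    have hd : ∀ t, b t = β t := by
      intro t
      have h := hQ0 t
      have h2 : (b t - β t) ⬝ᵥ S.mulVec (b t - β t) = 0 := by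
        have := sq_nonneg (ϑ t - θ t)
        simp only [hQ] at h
        linarith [(hquad (b t - β t)).1]
      have := (hquad (b t - β t)).2 h2
      exact sub_eq_zero.1 this
    exact ⟨funext hc, funext hd⟩
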